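/- Let F be a free group and α the periodicity abstraction (α(∅)=∅, α({g})={g}, α(L)=g·⟨p⟩ if |L|≥2 and L ⊆ g·⟨p⟩ with p primitive, else α(L)=F). Then α(L₁ · L₂) = α(α(L₁) · α(L₂)) for all L₁, L₂ ⊆ F, where L₁·L₂ is the elementwise product. -/

import Mathlib

open scoped Pointwise

/-- An element `p` of a free group is primitive if it is nontrivial and its only
roots are `p` itself and `p⁻¹`. -/
def IsPrimitiveElt {A : Type*} (p : FreeGroup A) : Prop :=
  p ≠ 1 ∧ ∀ (w : FreeGroup A) (l : ℤ), w ^ l = p → w = p ∨ w = p⁻¹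

/-- The coset `v·⟨p⟩ = {v * p^k : k ∈ ℤ}`. -/
def coset {A : Type*} (v p : FreeGroup A) : Set (FreeGroup A) :=
  {x | ∃ k : ℤ, x = v * p ^ k}

/-- A free group element is cyclically reduced if its reduced word does not begin
and end with mutually inverse letters. -/
def CyclicallyReduced {A : Type*} [DecidableEq A] (w : FreeGroup A) : Prop :=
  ∀ x y : A × Bool, w.toWord.head? = some x → w.toWord.getLast? = some y →
    ¬(x.1 = y.1 ∧ x.2 = !y.2)

open scoped Classical in
/-- The periodicity abstraction. -/
noncomputable def alpha {A : Type*} (L : Set (FreeGroup A)) : Set (FreeGroup A) :=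
  if L = ∅ then ∅
  else if ∃ g : FreeGroup A, L = {g} then L
  else if h : ∃ g p : FreeGroup A, IsPrimitiveElt p ∧ L ⊆ coset g p then
    coset h.choose h.choose_spec.choose
  else Set.univ

section Helpers

open FreeGroup


lemma list_all_eq {β : Type*} : ∀ (M : List β) (c : β), M ++ [c] = c :: M → ∀ x ∈ M, x = c := by
  intro M
  induction M with
  | nil => intro c _ x hx; simp at hx
  | cons d M ih =>
    intro c h x hx
    rw [List.cons_append, List.cons_eq_cons] at h
    obtain ⟨rfl, h2⟩ := h
    rw [List.mem_cons] at hx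
    rcases hx with rfl | hx
    · rfl
    · exact ih d h2 x hx

lemma head_of_commute {A : Type*} [DecidableEq A] (a : A) (w : FreeGroup A) (hw : w ≠ 1)
    (h : w * FreeGroup.of a = FreeGroup.of a * w) :
    ∃ s, w.toWord.head? = some (a, s) := by
  set L := w.toWord with hLdef
  have hLne : L ≠ [] := fun hnil => hw (toWord_eq_nil_iff.mp hnil)
  obtain ⟨hd, tl, hL⟩ := List.exists_cons_of_ne_nil hLne
  by_cases hne : hd.1 = a
  · refine ⟨hd.2, ?_⟩
    rw [hL]
    simp [← hne]
  exfalso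
  have hredL : reduce L = L := reduce_toWord w
  have hofa : (FreeGroup.of a : FreeGroup A) = mk [(a, true)] := rfl
  have E1 : (FreeGroup.of a * w).toWord = (a, true) :: L := by
    conv_lhs => rw [hofa, ← mk_toWord (x := w)]
    rw [mul_mk, toWord_mk]
    show reduce ((a,true) :: L) = _
    rw [reduce.cons, hredL, hL]
    simp [hne, Ne.symm hne]
  have hinv : ((w * FreeGroup.of a)⁻¹) = mk ((a, false) :: invRev L) := by
    rw [mul_inv_rev]
    have h1 : (FreeGroup.of a)⁻¹ = mk [(a, false)] := by
      rw [hofa, inv_mk]; simp [invRev]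
    have h2 : w⁻¹ = mk (invRev L) := by
      rw [← mk_toWord (x := w⁻¹), toWord_inv]
    rw [h1, h2, mul_mk]; rfl
  have hredinv : reduce (invRev L) = invRev L := by
    rw [reduce_invRev, hredL]
  have hinvne : invRev L ≠ [] := by
    intro hnil
    have := congrArg List.length hnil
    rw [invRev_length] at this
    simp [hL] at this
  obtain ⟨hd', tl', hL'⟩ := List.exists_cons_of_ne_nil hinvne
  have E2 : ((w * FreeGroup.of a)⁻¹).toWord =
      if (a, false).1 = hd'.1 ∧ (a, false).2 = !hd'.2 then tl'
      else (a, false) :: hd' :: tl' := by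
    rw [hinv, toWord_mk, reduce.cons, hredinv, hL']
  have hlen : ((w * FreeGroup.of a)⁻¹).toWord.length = L.length + 1 := by
    rw [toWord_inv, invRev_length, h, E1, List.length_cons]
  by_cases hc : (a, false).1 = hd'.1 ∧ (a, false).2 = !hd'.2
  · rw [if_pos hc] at E2
    have htl' : tl'.length + 1 = L.length := by
      have := congrArg List.length hL'
      rw [invRev_length] at this
      simpa using this.symm
    rw [E2] at hlen
    omega
  · rw [if_neg hc] at E2
    have E3 : ((w * FreeGroup.of a)⁻¹).toWord = invRev ((a, true) :: L) := by
      rw [toWord_inv, h, E1]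
    rw [E2, ← hL'] at E3
    have E4 : invRev ((a, true) :: L) = invRev L ++ [(a, false)] := by
      simp [invRev]
    rw [E4] at E3
    have hall := list_all_eq (invRev L) (a, false) E3.symm
    have hmem : (hd.1, !hd.2) ∈ invRev L := by
      unfold invRev
      rw [List.mem_reverse, List.mem_map]
      exact ⟨hd, by rw [hL]; simp, rfl⟩
    have := hall _ hmem
    exact hne (by simpa using congrArg Prod.fst this)

-- L2: an element commuting with two distinct generators is trivial
lemma eq_one_of_commute_two {A : Type*} {a b : A} (hab : a ≠ b) (w : FreeGroup A)
    (ha : Commute w (FreeGroup.of a)) (hb : Commute w (FreeGroup.of b)) : w = 1 := by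
  classical
  by_contra hw
  obtain ⟨s, hs⟩ := head_of_commute a w hw ha
  obtain ⟨t, ht⟩ := head_of_commute b w hw hb
  rw [hs] at ht
  exact hab (by simpa using congrArg (Option.map Prod.fst) ht)

-- L3: a free group with a nontrivial central element is cyclic
lemma cyclic_of_central {G : Type*} [Group G] [IsFreeGroup G] (z : G) (hz : z ≠ 1)
    (hc : ∀ g : G, Commute z g) : ∃ t : G, ∀ g : G, ∃ k : ℤ, g = t ^ k := by
  classical
  set X := IsFreeGroup.Generators G
  let e : FreeGroup X ≃* G := IsFreeGroup.mulEquiv G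
  have hX : ∀ a b : X, a = b := by
    intro a b
    by_contra hab
    have h1 : Commute (e.symm z) (FreeGroup.of a) := by
      have := hc (e (FreeGroup.of a))
      have : Commute (e.symm z) (e.symm (e (FreeGroup.of a))) := Commute.map this e.symm.toMonoidHom
      simpa using this
    have h2 : Commute (e.symm z) (FreeGroup.of b) := by
      have := hc (e (FreeGroup.of b))
      have : Commute (e.symm z) (e.symm (e (FreeGroup.of b))) := Commute.map this e.symm.toMonoidHom
      simpa using this
    have := eq_one_of_commute_two hab _ h1 h2
    exact hz (by simpa using congrArg e this)
  rcases isEmpty_or_nonempty X with hE | hN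
  · refine ⟨1, fun g => ⟨0, ?_⟩⟩
    have : ∀ w : FreeGroup X, w = 1 := by
      intro w
      induction w using FreeGroup.induction_on with
      | C1 => rfl
      | of x => exact (hE.false x).elim
      | inv_of x _ => exact (hE.false x).elim
      | mul x y hx hy => rw [hx, hy, one_mul]
    have hg : g = e (e.symm g) := (e.apply_symm_apply g).symm
    rw [hg, this (e.symm g)]; simp
  · obtain ⟨a₀⟩ := hN
    refine ⟨e (FreeGroup.of a₀), fun g => ?_⟩
    have : ∀ w : FreeGroup X, ∃ k : ℤ, w = FreeGroup.of a₀ ^ k := by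
      intro w
      induction w using FreeGroup.induction_on with
      | C1 => exact ⟨0, by simp⟩
      | of x => exact ⟨1, by rw [hX x a₀]; simp⟩
      | inv_of x hx =>
        obtain ⟨k, hk⟩ := hx
        exact ⟨-k, by rw [hk]; simp⟩
      | mul x y hx hy =>
        obtain ⟨k, hk⟩ := hx
        obtain ⟨l, hl⟩ := hy
        exact ⟨k + l, by rw [hk, hl, zpow_add]⟩
    obtain ⟨k, hk⟩ := this (e.symm g)
    refine ⟨k, ?_⟩
    have := congrArg e hk
    simpa using this

-- L4: common nontrivial power implies common root
lemma common_root {A : Type*} (x y : FreeGroup A) (m n : ℤ) (h : x ^ m = y ^ n)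
    (hne : x ^ m ≠ 1) : ∃ (z : FreeGroup A) (k l : ℤ), x = z ^ k ∧ y = z ^ l := by
  classical
  set H := Subgroup.closure ({x, y} : Set (FreeGroup A)) with hH
  have hx : x ∈ H := Subgroup.subset_closure (by simp)
  have hy : y ∈ H := Subgroup.subset_closure (by simp)
  have hzH : x ^ m ∈ H := Subgroup.zpow_mem H hx m
  have hcen : ∀ g ∈ H, Commute (x ^ m) g := by
    intro g hg
    induction hg using Subgroup.closure_induction with
    | mem g hg =>
      rcases hg with rfl | hg
      · exact (Commute.refl g).zpow_left m
      · simp only [Set.mem_singleton_iff] at hg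
        subst hg
        rw [h]
        exact (Commute.refl g).zpow_left n
    | one => exact Commute.one_right _
    | mul g g' _ _ hg hg' => exact hg.mul_right hg'
    | inv g _ hg => exact hg.inv_right
  have hz' : (⟨x ^ m, hzH⟩ : H) ≠ 1 := by
    intro hcon
    exact hne (by simpa using congrArg (Subtype.val) hcon)
  have hc' : ∀ g : H, Commute (⟨x ^ m, hzH⟩ : H) g := by
    intro g
    have := hcen g.1 g.2
    exact Subtype.ext (by simpa using this.eq)
  obtain ⟨t, ht⟩ := cyclic_of_central (⟨x ^ m, hzH⟩ : H) hz' hc'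
  obtain ⟨k, hk⟩ := ht ⟨x, hx⟩
  obtain ⟨l, hl⟩ := ht ⟨y, hy⟩
  refine ⟨t.1, k, l, ?_, ?_⟩
  · simpa using congrArg Subtype.val hk
  · simpa using congrArg Subtype.val hl

variable {A : Type*}

variable {A : Type*}

lemma prim_conj {p : FreeGroup A} (hp : IsPrimitiveElt p) (c : FreeGroup A) :
    IsPrimitiveElt (c * p * c⁻¹) := by
  constructor
  · intro h
    exact hp.1 (by
      have : p = c⁻¹ * (c * p * c⁻¹) * c := by group
      rw [this, h]; group)
  · intro w l hw
    have h' : (c⁻¹ * w * c) ^ l = p := by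
      have hcz := conj_zpow (i := l) (a := c⁻¹) (b := w)
      rw [inv_inv] at hcz
      rw [hcz, hw]
      group
    rcases hp.2 _ l h' with h | h
    · left
      have : w = c * (c⁻¹ * w * c) * c⁻¹ := by group
      rw [this, h]
    · right
      have : w = c * (c⁻¹ * w * c) * c⁻¹ := by group
      rw [this, h]; group

lemma prim_unique {p q : FreeGroup A} (hp : IsPrimitiveElt p) (hq : IsPrimitiveElt q)
    {k m : ℤ} (h : p ^ k = q ^ m) (hne : p ^ k ≠ 1) : q = p ∨ q = p⁻¹ := by
  obtain ⟨z, s, t, hzs, hzt⟩ := common_root p q k m h hne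
  rcases hp.2 z s hzs.symm with h1 | h1
  · rw [h1] at hzt
    rcases hq.2 p t hzt.symm with h' | h'
    · exact Or.inl h'.symm
    · exact Or.inr (by rw [h']; simp)
  · rw [h1] at hzt
    have hzt' : q = p ^ (-t) := by rw [hzt, inv_zpow, zpow_neg]
    rcases hq.2 p (-t) hzt'.symm with h' | h'
    · exact Or.inl h'.symm
    · exact Or.inr (by rw [h']; simp)

lemma mem_coset_self (g p : FreeGroup A) : g ∈ coset g p := ⟨0, by simp⟩

lemma coset_rebase {x g p : FreeGroup A} (hx : x ∈ coset g p) : coset g p = coset x p := by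
  obtain ⟨i, rfl⟩ := hx
  ext y
  constructor
  · rintro ⟨k, rfl⟩
    exact ⟨k - i, by rw [mul_assoc, ← zpow_add]; ring_nf⟩
  · rintro ⟨k, rfl⟩
    exact ⟨i + k, by rw [mul_assoc, ← zpow_add]⟩

lemma coset_inv (g p : FreeGroup A) : coset g p = coset g p⁻¹ := by
  ext y
  constructor
  · rintro ⟨k, rfl⟩; exact ⟨-k, by simp⟩
  · rintro ⟨k, rfl⟩; exact ⟨-k, by simp⟩

lemma coset_unique {a b v v' q q' : FreeGroup A} (hq : IsPrimitiveElt q)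
    (hq' : IsPrimitiveElt q') (ha : a ∈ coset v q) (hb : b ∈ coset v q)
    (ha' : a ∈ coset v' q') (hb' : b ∈ coset v' q') (hab : a ≠ b) :
    coset v q = coset v' q' := by
  rw [coset_rebase ha] at hb ⊢
  rw [coset_rebase ha'] at hb' ⊢
  obtain ⟨k, hk⟩ := hb
  obtain ⟨m, hm⟩ := hb'
  have h : q ^ k = q' ^ m := by
    have := hk.symm.trans hm
    exact mul_left_cancel this
  have hne : q ^ k ≠ 1 := by
    intro hcon
    rw [hcon, mul_one] at hk
    exact hab hk.symm
  rcases prim_unique hq hq' h hne with h' | h'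
  · rw [h']
  · rw [h', ← coset_inv]



variable {A : Type*}

lemma alpha_empty : alpha (∅ : Set (FreeGroup A)) = ∅ := by
  unfold alpha; simp

lemma alpha_singleton (g : FreeGroup A) : alpha ({g} : Set (FreeGroup A)) = {g} := by
  unfold alpha
  rw [if_neg (Set.singleton_ne_empty g), if_pos ⟨g, rfl⟩]

lemma subset_alpha (L : Set (FreeGroup A)) : L ⊆ alpha L := by
  unfold alpha
  split_ifs with h1 h2 h3
  · rw [h1]
  · exact subset_rfl
  · exact h3.choose_spec.choose_spec.2
  · exact Set.subset_univ L

lemma exists_pair {L : Set (FreeGroup A)} (h1 : L ≠ ∅) (h2 : ¬∃ g, L = {g}) :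
    ∃ a ∈ L, ∃ b ∈ L, a ≠ b := by
  obtain ⟨a, ha⟩ := Set.nonempty_iff_ne_empty.mpr h1
  by_contra hcon
  push_neg at hcon
  exact h2 ⟨a, Set.eq_singleton_iff_unique_mem.mpr ⟨ha, fun x hx => hcon x hx a ha⟩⟩

lemma alpha_eq_coset {L : Set (FreeGroup A)} {a b g p : FreeGroup A} (ha : a ∈ L) (hb : b ∈ L)
    (hab : a ≠ b) (hp : IsPrimitiveElt p) (hL : L ⊆ coset g p) : alpha L = coset g p := by
  unfold alpha
  split_ifs with h1 h2 h3
  · exact absurd (h1 ▸ ha) (Set.notMem_empty a)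
  · obtain ⟨c, rfl⟩ := h2
    exact absurd (ha.trans hb.symm : a = b) hab
  · have hspec := h3.choose_spec.choose_spec
    exact coset_unique hspec.1 hp (hspec.2 ha) (hspec.2 hb) (hL ha) (hL hb) hab
  · exact absurd ⟨g, p, hp, hL⟩ h3

lemma alpha_eq_univ {L : Set (FreeGroup A)} {a b : FreeGroup A} (ha : a ∈ L) (hb : b ∈ L)
    (hab : a ≠ b) (hnc : ¬∃ g p : FreeGroup A, IsPrimitiveElt p ∧ L ⊆ coset g p) :
    alpha L = Set.univ := by
  unfold alpha
  split_ifs with h1 h2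
  · exact absurd (h1 ▸ ha) (Set.notMem_empty a)
  · obtain ⟨c, rfl⟩ := h2
    exact absurd (ha.trans hb.symm : a = b) hab
  · rfl

lemma alpha_subset_coset {L : Set (FreeGroup A)} {v q : FreeGroup A} (hq : IsPrimitiveElt q)
    (hL : L ⊆ coset v q) : alpha L ⊆ coset v q := by
  by_cases h1 : L = ∅
  · rw [h1, alpha_empty]
    exact Set.empty_subset _
  by_cases h2 : ∃ g, L = {g}
  · obtain ⟨c, rfl⟩ := h2
    rw [alpha_singleton]
    exact hL
  obtain ⟨a, ha, b, hb, hab⟩ := exists_pair h1 h2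
  rw [alpha_eq_coset ha hb hab hq hL]

lemma alpha_sandwich {M N : Set (FreeGroup A)} (hMN : M ⊆ N) (hNa : N ⊆ alpha M) :
    alpha N = alpha M := by
  by_cases h1 : M = ∅
  · subst h1
    rw [alpha_empty] at hNa
    rw [Set.subset_empty_iff.mp hNa]
  by_cases h2 : ∃ g, M = {g}
  · obtain ⟨c, rfl⟩ := h2
    rw [alpha_singleton] at hNa
    rw [Set.Subset.antisymm hNa hMN]
  obtain ⟨a, ha, b, hb, hab⟩ := exists_pair h1 h2
  by_cases h3 : ∃ g p : FreeGroup A, IsPrimitiveElt p ∧ M ⊆ coset g p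
  · obtain ⟨g, p, hp, hsub⟩ := h3
    have hM := alpha_eq_coset ha hb hab hp hsub
    rw [hM] at hNa
    rw [hM, alpha_eq_coset (hMN ha) (hMN hb) hab hp hNa]
  · have hM := alpha_eq_univ ha hb hab h3
    have h3' : ¬∃ g p : FreeGroup A, IsPrimitiveElt p ∧ N ⊆ coset g p := by
      rintro ⟨g, p, hp, hsub⟩
      exact h3 ⟨g, p, hp, hMN.trans hsub⟩
    rw [hM, alpha_eq_univ (hMN ha) (hMN hb) hab h3']

lemma prod_subset_coset {L₁ L₂ : Set (FreeGroup A)} {a b g p : FreeGroup A}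
    (ha : a ∈ L₁) (hb : b ∈ L₂) (hp : IsPrimitiveElt p) (hsub : L₁ * L₂ ⊆ coset g p) :
    alpha L₁ * alpha L₂ ⊆ coset g p := by
  obtain ⟨i, hi⟩ := hsub (Set.mul_mem_mul ha hb)
  have h1 : L₁ ⊆ coset (g * b⁻¹) (b * p * b⁻¹) := by
    intro x hx
    obtain ⟨k, hk⟩ := hsub (Set.mul_mem_mul hx hb)
    refine ⟨k, ?_⟩
    have hx' : x = g * p ^ k * b⁻¹ := by rw [← hk]; group
    rw [hx', conj_zpow]
    group
  have h2 : L₂ ⊆ coset (a⁻¹ * g) p := by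
    intro y hy
    obtain ⟨k, hk⟩ := hsub (Set.mul_mem_mul ha hy)
    refine ⟨k, ?_⟩
    rw [mul_assoc, ← hk]
    group
  have V1 := alpha_subset_coset (prim_conj hp b) h1
  have V2 := alpha_subset_coset hp h2
  intro u hu
  rw [Set.mem_mul] at hu
  obtain ⟨x, hx, y, hy, rfl⟩ := hu
  obtain ⟨j, hj⟩ := V1 hx
  obtain ⟨k, hk⟩ := V2 hy
  have hab : a = g * p ^ i * b⁻¹ := by rw [← hi]; group
  refine ⟨j - i + k, ?_⟩
  rw [hj, hk, conj_zpow, hab, zpow_add, zpow_sub]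
  group

lemma key_subset (L₁ L₂ : Set (FreeGroup A)) :
    alpha L₁ * alpha L₂ ⊆ alpha (L₁ * L₂) := by
  by_cases h1 : L₁ = ∅
  · subst h1
    rw [alpha_empty, Set.empty_mul]
    exact Set.empty_subset _
  by_cases h2 : L₂ = ∅
  · subst h2
    rw [alpha_empty, Set.mul_empty]
    exact Set.empty_subset _
  obtain ⟨a, ha⟩ := Set.nonempty_iff_ne_empty.mpr h1
  obtain ⟨b, hb⟩ := Set.nonempty_iff_ne_empty.mpr h2
  by_cases h3 : ∃ c, L₁ * L₂ = {c}
  · obtain ⟨c, hc⟩ := h3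
    have hL1 : L₁ = {a} := by
      apply Set.eq_singleton_iff_unique_mem.mpr
      refine ⟨ha, fun x hx => ?_⟩
      have e1 : x * b = c := by
        have := hc ▸ Set.mul_mem_mul hx hb; exact this
      have e2 : a * b = c := by
        have := hc ▸ Set.mul_mem_mul ha hb; exact this
      exact mul_right_cancel (e1.trans e2.symm)
    have hL2 : L₂ = {b} := by
      apply Set.eq_singleton_iff_unique_mem.mpr
      refine ⟨hb, fun y hy => ?_⟩
      have e1 : a * y = c := by
        have := hc ▸ Set.mul_mem_mul ha hy; exact this
      have e2 : a * b = c := by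
        have := hc ▸ Set.mul_mem_mul ha hb; exact this
      exact mul_left_cancel (e1.trans e2.symm)
    rw [hL1, hL2, alpha_singleton, alpha_singleton, Set.singleton_mul_singleton,
      alpha_singleton]
  by_cases h4 : ∃ g p : FreeGroup A, IsPrimitiveElt p ∧ L₁ * L₂ ⊆ coset g p
  · obtain ⟨g, p, hp, hsub⟩ := h4
    have hne : L₁ * L₂ ≠ ∅ := by
      intro hcon
      exact (hcon ▸ Set.mul_mem_mul ha hb : (a*b) ∈ (∅ : Set (FreeGroup A)))
    obtain ⟨u, hu, v, hv, huv⟩ := exists_pair hne h3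
    rw [alpha_eq_coset hu hv huv hp hsub]
    exact prod_subset_coset ha hb hp hsub
  · have hne : L₁ * L₂ ≠ ∅ := by
      intro hcon
      exact (hcon ▸ Set.mul_mem_mul ha hb : (a*b) ∈ (∅ : Set (FreeGroup A)))
    obtain ⟨u, hu, v, hv, huv⟩ := exists_pair hne h3
    rw [alpha_eq_univ hu hv huv h4]
    exact Set.subset_univ _



end Helpers

theorem stmt13 {A : Type*} (L₁ L₂ : Set (FreeGroup A)) :
    alpha (L₁ * L₂) = alpha (alpha L₁ * alpha L₂) := by
  exact (alpha_sandwich (Set.mul_subset_mul (subset_alpha L₁) (subset_alpha L₂))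
    (key_subset L₁ L₂)).symm
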